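/- For d ≥ 3, the mean E(X) = Σ_{i=0}^{d} i·C(d,i)·(i+1)!/(d+1)^{i+1} is strictly greater than 1; for d = 2 it is at most 1. -/

import Mathlib

open Finset

lemma offspring_tele (d i : ℕ) :
    (d.choose i : ℝ) * (Nat.factorial (i + 1) : ℝ) / ((d : ℝ) + 1) ^ (i + 1)
      = (d.choose i : ℝ) * (Nat.factorial i : ℝ) / ((d : ℝ) + 1) ^ i
        - (d.choose (i + 1) : ℝ) * (Nat.factorial (i + 1) : ℝ) / ((d : ℝ) + 1) ^ (i + 1) := by
  have key : (d + 1) * (d.choose i * Nat.factorial i)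
      = d.choose i * Nat.factorial (i + 1) + d.choose (i + 1) * Nat.factorial (i + 1) := by
    have h1 : (d + 1) * d.choose i = (d + 1).choose (i + 1) * (i + 1) :=
      Nat.add_one_mul_choose_eq d i
    have h2 : (d + 1).choose (i + 1) = d.choose i + d.choose (i + 1) :=
      Nat.choose_succ_succ d i
    calc (d + 1) * (d.choose i * Nat.factorial i)
        = ((d + 1) * d.choose i) * Nat.factorial i := by ring
      _ = ((d.choose i + d.choose (i + 1)) * (i + 1)) * Nat.factorial i := by rw [h1, h2]
      _ = d.choose i * ((i + 1) * Nat.factorial i)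
            + d.choose (i + 1) * ((i + 1) * Nat.factorial i) := by ring
      _ = d.choose i * Nat.factorial (i + 1) + d.choose (i + 1) * Nat.factorial (i + 1) := by
          rw [Nat.factorial_succ]
  have keyR : ((d : ℝ) + 1) * ((d.choose i : ℝ) * (Nat.factorial i : ℝ))
      = (d.choose i : ℝ) * (Nat.factorial (i + 1) : ℝ)
        + (d.choose (i + 1) : ℝ) * (Nat.factorial (i + 1) : ℝ) := by
    exact_mod_cast congrArg (fun n : ℕ => (n : ℝ)) key
  have hd1 : ((d : ℝ) + 1) ≠ 0 := by positivity
  have h1 : ((d : ℝ) + 1) ^ (i + 1) ≠ 0 := pow_ne_zero _ hd1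
  have h2 : ((d : ℝ) + 1) ^ i ≠ 0 := pow_ne_zero _ hd1
  rw [eq_sub_iff_add_eq, ← add_div, div_eq_div_iff h1 h2, pow_succ]
  linear_combination (-(((d : ℝ) + 1) ^ i)) * keyR

lemma offspring_sum_one (d : ℕ) :
    ∑ i ∈ Finset.range (d + 1),
      (d.choose i : ℝ) * (Nat.factorial (i + 1) : ℝ) / ((d : ℝ) + 1) ^ (i + 1) = 1 := by
  have := Finset.sum_range_sub' (fun i => (d.choose i : ℝ) * (Nat.factorial i : ℝ) / ((d : ℝ) + 1) ^ i) (d + 1)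
  calc ∑ i ∈ Finset.range (d + 1),
        (d.choose i : ℝ) * (Nat.factorial (i + 1) : ℝ) / ((d : ℝ) + 1) ^ (i + 1)
      = ∑ i ∈ Finset.range (d + 1),
        ((d.choose i : ℝ) * (Nat.factorial i : ℝ) / ((d : ℝ) + 1) ^ i
          - (d.choose (i + 1) : ℝ) * (Nat.factorial (i + 1) : ℝ) / ((d : ℝ) + 1) ^ (i + 1)) := by
        exact Finset.sum_congr rfl fun i _ => offspring_tele d i
    _ = (d.choose 0 : ℝ) * (Nat.factorial 0 : ℝ) / ((d : ℝ) + 1) ^ 0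
          - (d.choose (d + 1) : ℝ) * (Nat.factorial (d + 1) : ℝ) / ((d : ℝ) + 1) ^ (d + 1) := this
    _ = 1 := by simp [Nat.choose_succ_self]

theorem offspring_mean_gt_one_iff :
    (∀ d : ℕ, 3 ≤ d →
      1 < ∑ i ∈ Finset.range (d + 1),
            (i : ℝ) * (d.choose i : ℝ) * (Nat.factorial (i + 1) : ℝ) / ((d : ℝ) + 1) ^ (i + 1))
    ∧ (∑ i ∈ Finset.range (2 + 1),
          (i : ℝ) * ((2 : ℕ).choose i : ℝ) * (Nat.factorial (i + 1) : ℝ)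
            / ((2 : ℝ) + 1) ^ (i + 1) ≤ 1) := by
  constructor
  · intro d hd
    have hx : (3 : ℝ) ≤ (d : ℝ) := by exact_mod_cast hd
    have hx1 : (0 : ℝ) < (d : ℝ) + 1 := by linarith
    set P : ℕ → ℝ := fun i =>
      (d.choose i : ℝ) * (Nat.factorial (i + 1) : ℝ) / ((d : ℝ) + 1) ^ (i + 1) with hP
    have hsplit : ∑ i ∈ Finset.range (d + 1),
        (i : ℝ) * (d.choose i : ℝ) * (Nat.factorial (i + 1) : ℝ) / ((d : ℝ) + 1) ^ (i + 1)
        = (∑ i ∈ Finset.range (d + 1), ((i : ℝ) - 1) * P i) + 1 := by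
      have e1 : ∑ i ∈ Finset.range (d + 1),
          (i : ℝ) * (d.choose i : ℝ) * (Nat.factorial (i + 1) : ℝ) / ((d : ℝ) + 1) ^ (i + 1)
          = ∑ i ∈ Finset.range (d + 1), (((i : ℝ) - 1) * P i + P i) :=
        Finset.sum_congr rfl fun i _ => by simp only [hP]; ring
      rw [e1, Finset.sum_add_distrib, offspring_sum_one d]
    rw [hsplit]
    have hPnonneg : ∀ i, 0 ≤ P i := fun i => by positivity
    have hsub : Finset.range 3 ⊆ Finset.range (d + 1) := by
      apply Finset.range_subset_range.2; omega
    have hge : ∑ i ∈ Finset.range 3, ((i : ℝ) - 1) * P i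
        ≤ ∑ i ∈ Finset.range (d + 1), ((i : ℝ) - 1) * P i := by
      apply Finset.sum_le_sum_of_subset_of_nonneg hsub
      intro i _ hi
      have : 3 ≤ i := by simpa using hi
      have : (1 : ℝ) ≤ (i : ℝ) := by exact_mod_cast le_trans (by norm_num) this
      have := hPnonneg i
      nlinarith
    have hch2 : ((d.choose 2 : ℕ) : ℝ) = (d : ℝ) * ((d : ℝ) - 1) / 2 := by
      rw [Nat.cast_choose_two]
    have hval : ∑ i ∈ Finset.range 3, ((i : ℝ) - 1) * P i
        = -(1 / ((d : ℝ) + 1)) + (d : ℝ) * ((d : ℝ) - 1) * 3 / ((d : ℝ) + 1) ^ 3 := by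
      simp only [Finset.sum_range_succ, Finset.sum_range_zero, hP]
      rw [hch2]
      simp [Nat.factorial]
      ring
    have hpos : 0 < ∑ i ∈ Finset.range 3, ((i : ℝ) - 1) * P i := by
      rw [hval]
      have he : -(1 / ((d : ℝ) + 1)) + (d : ℝ) * ((d : ℝ) - 1) * 3 / ((d : ℝ) + 1) ^ 3
          = (3 * (d : ℝ) * ((d : ℝ) - 1) - ((d : ℝ) + 1) ^ 2) / ((d : ℝ) + 1) ^ 3 := by
        field_simp
        ring
      rw [he]
      apply div_pos
      · nlinarith
      · positivity
    linarith
  · norm_num [Finset.sum_range_succ, Nat.factorial]
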